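/- Define V(k) = (k+1)/k · ( ∑_{i=1}^{k-1} S(i)/(i(i+1)(i+2)) + 4·∑_{i=1}^{k-1} 1/((i+1)(i+2)) + 4·∑_{i=1}^{k-1} (G(i)/i)/(i+2) ) − (G(k)/k)², where G(i) = 2i·∑_{j=2}^{i} 1/j and S(i) = i·(4·∑_{m=2}^{i-1}(G(m)/m)/(m+1) + G(i)/i). Then V(k) converges as k → ∞ and lim_{k→∞} V(k) = 7 − 2π²/3. -/

import Mathlib

open Real Filter

noncomputable def Gfun (i : ℕ) : ℝ := 2 * i * ∑ j ∈ Finset.Icc 2 i, (1 : ℝ) / j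

noncomputable def Sfun (i : ℕ) : ℝ :=
  (i : ℝ) * (4 * ∑ m ∈ Finset.Icc 2 (i - 1), (Gfun m / m) / (m + 1) + Gfun i / i)

noncomputable def Vfun (k : ℕ) : ℝ :=
  ((k : ℝ) + 1) / k *
    (∑ i ∈ Finset.Icc 1 (k - 1), Sfun i / (i * (i + 1) * (i + 2)) +
     4 * ∑ i ∈ Finset.Icc 1 (k - 1), (1 : ℝ) / ((i + 1) * (i + 2)) +
     4 * ∑ i ∈ Finset.Icc 1 (k - 1), (Gfun i / i) / (i + 2)) -
  (Gfun k / k) ^ 2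

noncomputable def Hh (n : ℕ) : ℝ := ∑ j ∈ Finset.Icc 1 n, (1 : ℝ) / j
noncomputable def Pp (n : ℕ) : ℝ := ∑ j ∈ Finset.Icc 1 n, (1 : ℝ) / (j : ℝ) ^ 2

lemma Hh_succ (n : ℕ) : Hh (n + 1) = Hh n + 1 / (n + 1) := by
  rw [Hh, Hh, Finset.sum_Icc_succ_top (by omega)]
  push_cast; ring

lemma Pp_succ (n : ℕ) : Pp (n + 1) = Pp n + 1 / ((n : ℝ) + 1) ^ 2 := by
  rw [Pp, Pp, Finset.sum_Icc_succ_top (by omega)]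
  push_cast; ring

lemma Hh_zero : Hh 0 = 0 := by simp [Hh]
lemma Pp_zero : Pp 0 = 0 := by simp [Pp]
lemma Hh_one : Hh 1 = 1 := by simp [Hh]
lemma Pp_one : Pp 1 = 1 := by simp [Pp]

lemma Gfun_div (i : ℕ) (hi : 1 ≤ i) : Gfun i / i = 2 * (Hh i - 1) := by
  have h2 : ∑ j ∈ Finset.Icc 2 i, (1 : ℝ) / j = Hh i - 1 := by
    have hins : Finset.Icc 1 i = insert 1 (Finset.Icc 2 i) := by
      ext x; simp only [Finset.mem_Icc, Finset.mem_insert]; omega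
    have hnm : (1 : ℕ) ∉ Finset.Icc 2 i := by simp
    rw [Hh, hins, Finset.sum_insert hnm]
    norm_num
  rw [Gfun, h2]
  have hi' : (i : ℝ) ≠ 0 := by positivity
  field_simp

lemma E_lemma (n : ℕ) :
    ∑ m ∈ Finset.Icc 2 n, (Gfun m / m) / (m + 1) =
      2 - 2 * Hh n + Hh n ^ 2 - Pp n - 2 / ((n : ℝ) + 1) + 2 * Hh n / ((n : ℝ) + 1) := by
  induction n with
  | zero => simp [Hh_zero, Pp_zero]
  | succ n ih =>
    rcases Nat.eq_zero_or_pos n with hn | hn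
    · subst hn
      norm_num [Hh_one, Pp_one]
    · rw [Finset.sum_Icc_succ_top (by omega), ih, Gfun_div (n + 1) (by omega),
        Hh_succ, Pp_succ]
      have h1 : (n : ℝ) + 1 ≠ 0 := by positivity
      have h2 : (n : ℝ) + 2 ≠ 0 := by positivity
      push_cast
      field_simp
      ring

lemma Sfun_eq (i : ℕ) (hi : 1 ≤ i) :
    Sfun i = (i : ℝ) * (6 - 6 * Hh i + 4 * Hh i ^ 2 - 4 * Pp i) := by
  obtain ⟨n, rfl⟩ : ∃ n, i = n + 1 := ⟨i - 1, by omega⟩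
  rw [Sfun]
  have hsub : n + 1 - 1 = n := rfl
  rw [hsub, E_lemma, Gfun_div (n + 1) (by omega), Hh_succ, Pp_succ]
  have h1 : (n : ℝ) + 1 ≠ 0 := by positivity
  push_cast
  field_simp
  ring

lemma B_lemma (n : ℕ) :
    ∑ i ∈ Finset.Icc 1 n, (1 : ℝ) / (((i : ℝ) + 1) * ((i : ℝ) + 2)) =
      1 / 2 - 1 / ((n : ℝ) + 2) := by
  induction n with
  | zero => norm_num
  | succ n ih =>
    rw [Finset.sum_Icc_succ_top (by omega), ih]
    have h2 : (n : ℝ) + 2 ≠ 0 := by positivity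
    have h3 : (n : ℝ) + 3 ≠ 0 := by positivity
    push_cast
    field_simp
    ring

lemma C_lemma (n : ℕ) :
    ∑ i ∈ Finset.Icc 1 n, (Gfun i / i) / ((i : ℝ) + 2) =
      1 - 2 * Hh n + Hh n ^ 2 - Pp n + 2 * Hh n / ((n : ℝ) + 1) - 2 / ((n : ℝ) + 2)
        + 2 * Hh n / ((n : ℝ) + 2) := by
  induction n with
  | zero => simp [Hh_zero, Pp_zero]
  | succ n ih =>
    rw [Finset.sum_Icc_succ_top (by omega), ih, Gfun_div (n + 1) (by omega),
      Hh_succ, Pp_succ]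
    have h1 : (n : ℝ) + 1 ≠ 0 := by positivity
    have h2 : (n : ℝ) + 2 ≠ 0 := by positivity
    have h3 : (n : ℝ) + 3 ≠ 0 := by positivity
    push_cast
    field_simp
    ring

lemma A_lemma (n : ℕ) :
    ∑ i ∈ Finset.Icc 1 n, Sfun i / ((i : ℝ) * ((i : ℝ) + 1) * ((i : ℝ) + 2)) =
      5 - 2 / ((n : ℝ) + 1) - 8 * Hh n / ((n : ℝ) + 1) - 6 / ((n : ℝ) + 2)
        + 6 * Hh n / ((n : ℝ) + 2) - 4 * Hh n ^ 2 / ((n : ℝ) + 2)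
        + 4 * Pp n / ((n : ℝ) + 2) := by
  induction n with
  | zero => simp [Hh_zero, Pp_zero]; norm_num
  | succ n ih =>
    rw [Finset.sum_Icc_succ_top (by omega), ih, Sfun_eq (n + 1) (by omega),
      Hh_succ, Pp_succ]
    have h1 : (n : ℝ) + 1 ≠ 0 := by positivity
    have h2 : (n : ℝ) + 2 ≠ 0 := by positivity
    have h3 : (n : ℝ) + 3 ≠ 0 := by positivity
    push_cast
    field_simp
    ring

lemma Vfun_closed (k : ℕ) (hk : 1 ≤ k) :
    Vfun k = 7 - 4 * Pp k - 1 / (k : ℝ) - 2 * Hh k / k := by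
  obtain ⟨n, rfl⟩ : ∃ n, k = n + 1 := ⟨k - 1, by omega⟩
  rw [Vfun]
  have hsub : n + 1 - 1 = n := rfl
  rw [hsub, A_lemma, B_lemma, C_lemma, Gfun_div (n + 1) (by omega), Hh_succ, Pp_succ]
  have h1 : (n : ℝ) + 1 ≠ 0 := by positivity
  have h2 : (n : ℝ) + 2 ≠ 0 := by positivity
  push_cast
  field_simp
  ring

lemma Hh_range (n : ℕ) : Hh n = ∑ j ∈ Finset.range n, (1 : ℝ) / ((j : ℝ) + 1) := by
  induction n with
  | zero => simp [Hh_zero]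
  | succ n ih => rw [Hh_succ, Finset.sum_range_succ, ih]

lemma Pp_range (n : ℕ) : Pp n = ∑ j ∈ Finset.range (n + 1), (1 : ℝ) / (j : ℝ) ^ 2 := by
  induction n with
  | zero => simp [Pp_zero]
  | succ n ih => rw [Pp_succ, Finset.sum_range_succ, ih]; push_cast; ring

lemma tendsto_Pp : Tendsto Pp atTop (nhds (π ^ 2 / 6)) := by
  have h := hasSum_zeta_two.tendsto_sum_nat
  have h2 := h.comp (tendsto_add_atTop_nat 1)
  refine h2.congr fun n => ?_
  simp only [Function.comp_apply, Pp_range]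

lemma tendsto_Hh_div : Tendsto (fun n : ℕ => Hh n / n) atTop (nhds 0) := by
  have h := tendsto_one_div_add_atTop_nhds_zero_nat.cesaro
  refine h.congr fun n => ?_
  rw [Hh_range, div_eq_inv_mul]

theorem stmt_11 : Tendsto Vfun atTop (nhds (7 - 2 * π ^ 2 / 3)) := by
  have h1 : Tendsto (fun k : ℕ => 7 - 4 * Pp k - 1 / (k : ℝ) - 2 * Hh k / k) atTop
      (nhds (7 - 2 * π ^ 2 / 3)) := by
    have h2 : Tendsto (fun k : ℕ => ((7 : ℝ) - 4 * Pp k - 1 / (k : ℝ)) - 2 * (Hh k / k))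
        atTop (nhds (((7 : ℝ) - 4 * (π ^ 2 / 6) - 0) - 2 * 0)) :=
      ((tendsto_const_nhds.sub (tendsto_Pp.const_mul 4)).sub
        tendsto_one_div_atTop_nhds_zero_nat).sub (tendsto_Hh_div.const_mul 2)
    convert h2 using 2 with k
    · rw [mul_div_assoc]
    · ring
  refine h1.congr' ?_
  filter_upwards [eventually_ge_atTop 1] with k hk
  exact (Vfun_closed k hk).symm
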